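/- Soundness of Herbrand's modus-ponens-free calculus: If a first-order formula A is derivable from a sentential tautology by applications of the generalized rules of simplification, γ-quantification and δ-quantification (and renamings of bound variables), then A is valid. -/

import Mathlib

namespace Herbrand

abbrev FSym := Option (ℕ ⊕ ℕ)

inductive Tm : Type where
  | var : ℕ → Tm
  | fn : FSym → List Tm → Tm

inductive Fm : Type where
  | atom : ℕ → List Tm → Fm
  | neg : Fm → Fm
  | or : Fm → Fm → Fm
  | and : Fm → Fm → Fm
  | all : ℕ → Fm → Fm
  | ex : ℕ → Fm → Fm

mutual
  def Tm.beq : Tm → Tm → Bool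
    | .var x, .var y => x == y
    | .fn f ts, .fn g us => f == g && Tm.beqList ts us
    | _, _ => false
  def Tm.beqList : List Tm → List Tm → Bool
    | [], [] => true
    | t :: ts, u :: us => Tm.beq t u && Tm.beqList ts us
    | _, _ => false
end

def Tm.height : Tm → ℕ
  | .var _ => 1
  | .fn _ ts => 1 + ts.attach.foldr (fun ⟨t, _⟩ m => max (Tm.height t) m) 0

def Tm.varsT : Tm → List ℕ
  | .var x => [x]
  | .fn _ ts => ts.attach.foldr (fun ⟨t, _⟩ l => Tm.varsT t ++ l) []

def Tm.symsT : Tm → List (FSym × ℕ)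
  | .var _ => []
  | .fn f ts => (f, ts.length) :: ts.attach.foldr (fun ⟨t, _⟩ l => Tm.symsT t ++ l) []

def Tm.substT (x : ℕ) (u : Tm) : Tm → Tm
  | .var y => if y = x then u else .var y
  | .fn f ts => .fn f (ts.attach.map fun ⟨t, _⟩ => Tm.substT x u t)

/-- A term is over the base language: no Skolem symbols, no bullet. -/
def Tm.isBaseT (t : Tm) : Prop := ∀ p ∈ t.symsT, ∃ k : ℕ, p.1 = some (Sum.inl k)

def Fm.freeVars : Fm → List ℕ
  | .atom _ ts => ts.flatMap Tm.varsT
  | .neg A => A.freeVars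
  | .or A B => A.freeVars ++ B.freeVars
  | .and A B => A.freeVars ++ B.freeVars
  | .all x A => A.freeVars.filter (· ≠ x)
  | .ex x A => A.freeVars.filter (· ≠ x)

def Fm.boundVars : Fm → List ℕ
  | .atom _ _ => []
  | .neg A => A.boundVars
  | .or A B => A.boundVars ++ B.boundVars
  | .and A B => A.boundVars ++ B.boundVars
  | .all x A => x :: A.boundVars
  | .ex x A => x :: A.boundVars

def Fm.symsF : Fm → List (FSym × ℕ)
  | .atom _ ts => ts.flatMap Tm.symsT
  | .neg A => A.symsF
  | .or A B => A.symsF ++ B.symsF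
  | .and A B => A.symsF ++ B.symsF
  | .all _ A => A.symsF
  | .ex _ A => A.symsF

/-- Naive substitution of the term `u` for the free occurrences of the variable `x`. -/
def Fm.subst (x : ℕ) (u : Tm) : Fm → Fm
  | .atom p ts => .atom p (ts.map (Tm.substT x u))
  | .neg A => .neg (Fm.subst x u A)
  | .or A B => .or (Fm.subst x u A) (Fm.subst x u B)
  | .and A B => .and (Fm.subst x u A) (Fm.subst x u B)
  | .all y A => if y = x then .all y A else .all y (Fm.subst x u A)
  | .ex y A => if y = x then .ex y A else .ex y (Fm.subst x u A)

/-- Quantifier-freeness. -/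
def Fm.qf : Fm → Prop
  | .atom _ _ => True
  | .neg A => A.qf
  | .or A B => A.qf ∧ B.qf
  | .and A B => A.qf ∧ B.qf
  | .all _ _ => False
  | .ex _ _ => False

def Fm.qfB : Fm → Bool
  | .atom _ _ => true
  | .neg A => A.qfB
  | .or A B => A.qfB && B.qfB
  | .and A B => A.qfB && B.qfB
  | .all _ _ => false
  | .ex _ _ => false

/-- A formula is over the base language. -/
def Fm.isBase (A : Fm) : Prop := ∀ p ∈ A.symsF, ∃ k : ℕ, p.1 = some (Sum.inl k)

/-- Rectified: distinct binders, and bound variables distinct from free variables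
(the tacit assumption of the paper: every occurrence of every variable is either
free or bound by a unique quantifier). -/
def Fm.rectified (A : Fm) : Prop :=
  A.boundVars.Nodup ∧ ∀ x ∈ A.boundVars, x ∉ A.freeVars

/-- Sentential (Boolean) evaluation, reading each atomic formula (a predicate symbol
together with its argument terms) as a propositional variable. -/
def Fm.sentEval (β : ℕ → List Tm → Bool) : Fm → Bool
  | .atom p ts => β p ts
  | .neg A => !(A.sentEval β)
  | .or A B => A.sentEval β || B.sentEval β
  | .and A B => A.sentEval β && B.sentEval β
  | .all _ _ => false
  | .ex _ _ => false

/-- A sentential tautology: a quantifier-free formula that evaluates to true under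
every Boolean valuation of its atoms. -/
def Fm.taut (A : Fm) : Prop := A.qf ∧ ∀ β : ℕ → List Tm → Bool, A.sentEval β = true

/-- An interpretation of the language on a domain `D`. -/
structure Interp (D : Type) where
  fns : FSym → List D → D
  prd : ℕ → List D → Prop

def Tm.eval {D : Type} (I : Interp D) (v : ℕ → D) : Tm → D
  | .var x => v x
  | .fn f ts => I.fns f (ts.attach.map fun ⟨t, _⟩ => Tm.eval I v t)

def Fm.holds {D : Type} (I : Interp D) (v : ℕ → D) : Fm → Prop
  | .atom p ts => I.prd p (ts.map (Tm.eval I v))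
  | .neg A => ¬ Fm.holds I v A
  | .or A B => Fm.holds I v A ∨ Fm.holds I v B
  | .and A B => Fm.holds I v A ∧ Fm.holds I v B
  | .all x A => ∀ d : D, Fm.holds I (Function.update v x d) A
  | .ex x A => ∃ d : D, Fm.holds I (Function.update v x d) A

/-- Validity: truth in every structure (nonempty domain) under every assignment. -/
def Fm.valid (A : Fm) : Prop :=
  ∀ (D : Type) (_ : Nonempty D) (I : Interp D) (v : ℕ → D), A.holds I v


/-- Alpha-equivalence: equality of formulas up to renaming of bound variables. -/
inductive Alpha : Fm → Fm → Prop where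
  | refl (A : Fm) : Alpha A A
  | symm {A B : Fm} : Alpha A B → Alpha B A
  | trans {A B C : Fm} : Alpha A B → Alpha B C → Alpha A C
  | negc {A B : Fm} : Alpha A B → Alpha (.neg A) (.neg B)
  | orc {A A' B B' : Fm} : Alpha A A' → Alpha B B' → Alpha (.or A B) (.or A' B')
  | andc {A A' B B' : Fm} : Alpha A A' → Alpha B B' → Alpha (.and A B) (.and A' B')
  | allc {A B : Fm} (x : ℕ) : Alpha A B → Alpha (.all x A) (.all x B)
  | exc {A B : Fm} (x : ℕ) : Alpha A B → Alpha (.ex x A) (.ex x B)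
  | allRename (x y : ℕ) (A : Fm) : y ∉ A.freeVars → y ∉ A.boundVars →
      Alpha (.all x A) (.all y (Fm.subst x (.var y) A))
  | exRename (x y : ℕ) (A : Fm) : y ∉ A.freeVars → y ∉ A.boundVars →
      Alpha (.ex x A) (.ex y (Fm.subst x (.var y) A))

/-- One-hole contexts `A[…]` in formulas. -/
inductive Ctx : Type where
  | hole : Ctx
  | negC : Ctx → Ctx
  | orL : Ctx → Fm → Ctx
  | orR : Fm → Ctx → Ctx
  | andL : Ctx → Fm → Ctx
  | andR : Fm → Ctx → Ctx
  | allC : ℕ → Ctx → Ctx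
  | exC : ℕ → Ctx → Ctx

def Ctx.fill : Ctx → Fm → Fm
  | .hole, H => H
  | .negC c, H => .neg (c.fill H)
  | .orL c B, H => .or (c.fill H) B
  | .orR B c, H => .or B (c.fill H)
  | .andL c B, H => .and (c.fill H) B
  | .andR B c, H => .and B (c.fill H)
  | .allC x c, H => .all x (c.fill H)
  | .exC x c, H => .ex x (c.fill H)

/-- `true` iff the hole is in the scope of an even number of negation symbols. -/
def Ctx.pol : Ctx → Bool
  | .hole => true
  | .negC c => !c.pol
  | .orL c _ => c.pol
  | .orR _ c => c.pol
  | .andL c _ => c.pol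
  | .andR _ c => c.pol
  | .allC _ c => c.pol
  | .exC _ c => c.pol

/-- The hole is accessible: not in the scope of any quantifier. -/
def Ctx.accessible : Ctx → Prop
  | .hole => True
  | .negC c => c.accessible
  | .orL c _ => c.accessible
  | .orR _ c => c.accessible
  | .andL c _ => c.accessible
  | .andR _ c => c.accessible
  | .allC _ _ => False
  | .exC _ _ => False

/-- Variables occurring free in the context (the hole contributing nothing). -/
def Ctx.freeVarsC : Ctx → List ℕ
  | .hole => []
  | .negC c => c.freeVarsC
  | .orL c B => c.freeVarsC ++ B.freeVars
  | .orR B c => B.freeVars ++ c.freeVarsC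
  | .andL c B => c.freeVarsC ++ B.freeVars
  | .andR B c => B.freeVars ++ c.freeVarsC
  | .allC x c => c.freeVarsC.filter (· ≠ x)
  | .exC x c => c.freeVarsC.filter (· ≠ x)

/-- `mkQ q x H` is `∃x.H` if `q = true`, and `∀x.H` if `q = false`.
A quantifier `mkQ q x` sitting in a context `c` is existentialoid iff `q = c.pol`
(i.e. `∃` under an even number of negations or `∀` under an odd number),
and universaloid iff `q = !c.pol`. -/
def mkQ (q : Bool) (x : ℕ) (H : Fm) : Fm := if q then .ex x H else .all x H

/-- Derivations in the modern version of Herbrand's modus-ponens-free calculus,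
from a start formula, recording the list of instance terms `t` used by the
applications of the generalized rule of γ-quantification. -/
inductive Deriv : Fm → Fm → List Tm → Prop where
  | refl (A : Fm) : Deriv A A []
  | gamma {B : Fm} {ts : List Tm} (c : Ctx) (q : Bool) (x : ℕ) (t : Tm) (H : Fm) :
      Deriv B (c.fill (Fm.subst x t H)) ts →
      c.accessible → q = c.pol → (∀ z ∈ t.varsT, z ∉ H.boundVars) →
      Deriv B (c.fill (mkQ q x H)) (ts ++ [t])
  | delta {B : Fm} {ts : List Tm} (c : Ctx) (q : Bool) (y : ℕ) (H : Fm) :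
      Deriv B (c.fill H) ts →
      c.accessible → q = !c.pol → y ∉ c.freeVarsC →
      Deriv B (c.fill (mkQ q y H)) ts
  | simp {B : Fm} {ts : List Tm} (c : Ctx) (H H' : Fm) :
      Deriv B (c.fill (if c.pol then Fm.or H H' else Fm.and H H')) ts →
      Alpha H H' →
      Deriv B (c.fill H) ts
  | alpha {B A A' : Fm} {ts : List Tm} : Deriv B A ts → Alpha A A' → Deriv B A' ts

/-- A single application of a generalized rule of γ- or δ-quantification. -/
inductive QStep : Fm → Fm → Prop where
  | gamma (c : Ctx) (q : Bool) (x : ℕ) (t : Tm) (H : Fm) :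
      c.accessible → q = c.pol → (∀ z ∈ t.varsT, z ∉ H.boundVars) →
      QStep (c.fill (Fm.subst x t H)) (c.fill (mkQ q x H))
  | delta (c : Ctx) (q : Bool) (y : ℕ) (H : Fm) :
      c.accessible → q = !c.pol → y ∉ c.freeVarsC →
      QStep (c.fill H) (c.fill (mkQ q y H))

/-- A single application of the generalized rule of γ-simplification:
simplification where `H` is of the form `Qy.C` with `Qy.` existentialoid. -/
inductive GSimpStep : Fm → Fm → Prop where
  | mk (c : Ctx) (y : ℕ) (C H' : Fm) :
      Alpha (mkQ c.pol y C) H' →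
      GSimpStep
        (c.fill (if c.pol then Fm.or (mkQ c.pol y C) H' else Fm.and (mkQ c.pol y C) H'))
        (c.fill (mkQ c.pol y C))


/-- The Skolem term `x*(y₁,…,yₘ)` for the removed universaloid variable `x`,
whose arguments are the variables of the existentialoid quantifiers in scope. -/
def skTm (x : ℕ) (γs : List ℕ) : Tm := .fn (some (Sum.inr x)) (γs.map Tm.var)

/-- Outer Skolemization: `b` is the polarity (`true` = an even number of negations
so far), `γs` the list of variables of the existentialoid quantifiers in whose
scope we are, in order. Universaloid quantifiers are removed and their variables
replaced by Skolem terms; existentialoid quantifiers are kept. -/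
def Fm.skolemize (b : Bool) (γs : List ℕ) : Fm → Fm
  | .atom p ts => .atom p ts
  | .neg A => .neg (A.skolemize (!b) γs)
  | .or A B => .or (A.skolemize b γs) (B.skolemize b γs)
  | .and A B => .and (A.skolemize b γs) (B.skolemize b γs)
  | .all x A => if b then Fm.subst x (skTm x γs) (A.skolemize b γs)
                else .all x (A.skolemize b (γs ++ [x]))
  | .ex x A => if b then .ex x (A.skolemize b (γs ++ [x]))
               else Fm.subst x (skTm x γs) (A.skolemize b γs)

/-- The outer Skolemized form of a formula. -/
def Fm.outerSk (A : Fm) : Fm := A.skolemize true []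

def falsum : Fm := .and (.atom 0 []) (.neg (.atom 0 []))
def verum : Fm := .or (.atom 0 []) (.neg (.atom 0 []))

def bigOr : List Fm → Fm
  | [] => falsum
  | [A] => A
  | A :: B :: rest => .or A (bigOr (B :: rest))

def bigAnd : List Fm → Fm
  | [] => verum
  | [A] => A
  | A :: B :: rest => .and A (bigAnd (B :: rest))

/-- All lists of length `k` over the given list. -/
def tuples : ℕ → List Tm → List (List Tm)
  | 0, _ => [[]]
  | k + 1, l => l.flatMap fun a => (tuples k l).map (a :: ·)

/-- The fresh constant `•` is included iff `F` contains neither constants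
nor free variables. -/
def Fm.allowBullet (F : Fm) : Bool :=
  F.freeVars.isEmpty && F.symsF.all (fun p => p.2 != 0)

/-- The champ fini `T_n(F)`: all terms of height `< n` built from the function
symbols (with their arities), constant symbols, and free variables of `F`
(with the fresh constant `•` added if `F` has neither constants nor free
variables).  `T_1(F) = ∅`. -/
def Fm.champTm (F : Fm) : ℕ → List Tm
  | 0 => []
  | 1 => []
  | n + 2 =>
      F.freeVars.map Tm.var
        ++ (if F.allowBullet then [Tm.fn none []] else [])
        ++ F.symsF.flatMap (fun p => (tuples p.2 (F.champTm (n + 1))).map (Tm.fn p.1))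

/-- The expansion `A^T` of `A` w.r.t. a finite set (list) of terms `T`. -/
def Fm.expandL (T : List Tm) : Fm → Fm
  | .atom p ts => .atom p ts
  | .neg A => .neg (A.expandL T)
  | .or A B => .or (A.expandL T) (B.expandL T)
  | .and A B => .and (A.expandL T) (B.expandL T)
  | .ex x A => bigOr (T.map fun t => Fm.subst x t (A.expandL T))
  | .all x A => bigAnd (T.map fun t => Fm.subst x t (A.expandL T))

/-- Property C of order `n` (for `n ≥ 1`): letting `F` be the outer Skolemized
form of `A`, for `n = 1` the formula `F` itself must be a sentential tautology,
and for `n > 1` the expansion `F^{T_n(F)}` must be a sentential tautology. -/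
def Fm.hasC (A : Fm) (n : ℕ) : Prop :=
  (if n = 1 then A.outerSk else Fm.expandL (A.outerSk.champTm n) A.outerSk).taut


/-- Reading every term that starts with a Skolem function symbol as an atomic
variable, via an injective coding `code` of terms into variable names. -/
def Tm.readSk (code : Tm → ℕ) : Tm → Tm
  | .var x => .var x
  | .fn (some (Sum.inr k)) ts => .var (code (.fn (some (Sum.inr k)) ts))
  | .fn (some (Sum.inl k)) ts => .fn (some (Sum.inl k)) (ts.attach.map fun ⟨t, _⟩ => Tm.readSk code t)
  | .fn none ts => .fn none (ts.attach.map fun ⟨t, _⟩ => Tm.readSk code t)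

def Fm.readSk (code : Tm → ℕ) : Fm → Fm
  | .atom p ts => .atom p (ts.map (Tm.readSk code))
  | .neg A => .neg (A.readSk code)
  | .or A B => .or (A.readSk code) (B.readSk code)
  | .and A B => .and (A.readSk code) (B.readSk code)
  | .all x A => .all x (A.readSk code)
  | .ex x A => .ex x (A.readSk code)

/-- The atoms (predicate symbol with argument terms) occurring in a formula. -/
def Fm.atoms : Fm → List (ℕ × List Tm)
  | .atom p ts => [(p, ts)]
  | .neg A => A.atoms
  | .or A B => A.atoms ++ B.atoms
  | .and A B => A.atoms ++ B.atoms
  | .all _ A => A.atoms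
  | .ex _ A => A.atoms

/-- All Boolean valuations of a finite list of atoms (all other atoms `false`). -/
def valuations : List (ℕ × List Tm) → List (ℕ → List Tm → Bool)
  | [] => [fun _ _ => false]
  | a :: rest =>
      (valuations rest).flatMap fun β =>
        [fun p ts => if p == a.1 && Tm.beqList ts a.2 then true else β p ts,
         fun p ts => if p == a.1 && Tm.beqList ts a.2 then false else β p ts]

/-- Computable check for sentential tautology. -/
def Fm.tautB (A : Fm) : Bool :=
  A.qfB && (valuations A.atoms).all fun β => A.sentEval β

/-- Computable check for Property C of order `n`. -/
def Fm.hasCB (A : Fm) (n : ℕ) : Bool :=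
  (if n = 1 then A.outerSk else Fm.expandL (A.outerSk.champTm n) A.outerSk).tautB

/-- The six rules of passage, read from left to right. -/
inductive PassEq : Fm → Fm → Prop where
  | p1 (x : ℕ) (A : Fm) : PassEq (.neg (.all x A)) (.ex x (.neg A))
  | p2 (x : ℕ) (A : Fm) : PassEq (.neg (.ex x A)) (.all x (.neg A))
  | p3 (x : ℕ) (A B : Fm) : x ∉ B.freeVars → PassEq (.or (.all x A) B) (.all x (.or A B))
  | p4 (x : ℕ) (A B : Fm) : x ∉ B.freeVars → PassEq (.or B (.all x A)) (.all x (.or B A))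
  | p5 (x : ℕ) (A B : Fm) : x ∉ B.freeVars → PassEq (.or (.ex x A) B) (.ex x (.or A B))
  | p6 (x : ℕ) (A B : Fm) : x ∉ B.freeVars → PassEq (.or B (.ex x A)) (.ex x (.or B A))

/-- A single inference step of Herbrand's historic modus-ponens-free calculus:
the shallow rules of γ- and δ-quantification (empty context), the generalized
(deep) rule of simplification, the twelve (deep) rules of passage, and renaming
of bound variables. -/
inductive HStep : Fm → Fm → Prop where
  | gammaSh (x : ℕ) (t : Tm) (H : Fm) :
      (∀ z ∈ t.varsT, z ∉ H.boundVars) →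
      HStep (Fm.subst x t H) (.ex x H)
  | deltaSh (y : ℕ) (H : Fm) :
      HStep H (.all y H)
  | simp (c : Ctx) (H H' : Fm) :
      Alpha H H' →
      HStep (c.fill (if c.pol then Fm.or H H' else Fm.and H H')) (c.fill H)
  | passage (c : Ctx) (L R : Fm) : PassEq L R → HStep (c.fill L) (c.fill R)
  | passageRev (c : Ctx) (L R : Fm) : PassEq L R → HStep (c.fill R) (c.fill L)
  | alpha (A B : Fm) : Alpha A B → HStep A B


/-! ### Auxiliary lemmas for soundness -/

theorem Tm.eval_fn {D : Type} (I : Interp D) (v : ℕ → D) (f : FSym) (ts : List Tm) :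
    Tm.eval I v (.fn f ts) = I.fns f (ts.map (Tm.eval I v)) := by
  simp only [Tm.eval]
  congr 1
  exact List.attach_map_val (l := ts) (f := Tm.eval I v)

theorem Tm.substT_fn (x : ℕ) (u : Tm) (f : FSym) (ts : List Tm) :
    Tm.substT x u (.fn f ts) = .fn f (ts.map (Tm.substT x u)) := by
  simp only [Tm.substT]
  congr 1
  exact List.attach_map_val (l := ts) (f := Tm.substT x u)

theorem Tm.varsT_fn (f : FSym) (ts : List Tm) :
    Tm.varsT (.fn f ts) = ts.flatMap Tm.varsT := by
  simp only [Tm.varsT]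
  induction ts with
  | nil => simp
  | cons a as ih =>
      simp only [List.attach_cons, List.foldr_cons, List.foldr_map, List.flatMap_cons]
      rw [← ih]

theorem Tm.eval_congr {D : Type} (I : Interp D) :
    ∀ (t : Tm) (v w : ℕ → D), (∀ z ∈ t.varsT, v z = w z) → Tm.eval I v t = Tm.eval I w t
  | .var x, v, w, h => by
      simp only [Tm.eval]
      exact h x (by simp [Tm.varsT])
  | .fn f ts, v, w, h => by
      rw [Tm.eval_fn, Tm.eval_fn]
      congr 1
      apply List.map_congr_left
      intro t ht
      exact Tm.eval_congr I t v w (fun z hz => h z (by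
        rw [Tm.varsT_fn]; exact List.mem_flatMap.mpr ⟨t, ht, hz⟩))
  termination_by t => sizeOf t
  decreasing_by
    have := List.sizeOf_lt_of_mem ht
    simp only [Tm.fn.sizeOf_spec]
    omega

theorem Tm.eval_substT {D : Type} (I : Interp D) (x : ℕ) (u : Tm) :
    ∀ (t : Tm) (v : ℕ → D),
      Tm.eval I v (Tm.substT x u t) = Tm.eval I (Function.update v x (Tm.eval I v u)) t
  | .var y, v => by
      by_cases h : y = x <;> simp [Tm.substT, Tm.eval, Function.update, h]
  | .fn f ts, v => by
      rw [Tm.substT_fn, Tm.eval_fn, Tm.eval_fn, List.map_map]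
      congr 1
      apply List.map_congr_left
      intro t ht
      exact Tm.eval_substT I x u t v
  termination_by t => sizeOf t
  decreasing_by
    have := List.sizeOf_lt_of_mem ht
    simp only [Tm.fn.sizeOf_spec]
    omega


theorem Fm.holds_congr {D : Type} (I : Interp D) :
    ∀ (A : Fm) (v w : ℕ → D), (∀ z ∈ A.freeVars, v z = w z) →
      (Fm.holds I v A ↔ Fm.holds I w A) := by
  intro A
  induction A with
  | atom p ts =>
      intro v w h
      simp only [Fm.holds, Fm.freeVars] at *
      have : ts.map (Tm.eval I v) = ts.map (Tm.eval I w) := by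
        apply List.map_congr_left
        intro t ht
        exact Tm.eval_congr I t v w (fun z hz => h z (List.mem_flatMap.mpr ⟨t, ht, hz⟩))
      rw [this]
  | neg A ih =>
      intro v w h
      simp only [Fm.holds, Fm.freeVars] at *
      rw [ih v w h]
  | or A B ihA ihB =>
      intro v w h
      simp only [Fm.holds, Fm.freeVars, List.mem_append] at *
      rw [ihA v w (fun z hz => h z (Or.inl hz)), ihB v w (fun z hz => h z (Or.inr hz))]
  | and A B ihA ihB =>
      intro v w h
      simp only [Fm.holds, Fm.freeVars, List.mem_append] at *
      rw [ihA v w (fun z hz => h z (Or.inl hz)), ihB v w (fun z hz => h z (Or.inr hz))]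
  | all x A ih =>
      intro v w h
      simp only [Fm.holds, Fm.freeVars] at *
      apply forall_congr'
      intro d
      apply ih
      intro z hz
      by_cases hzx : z = x
      · subst hzx; simp [Function.update]
      · have := h z (List.mem_filter.mpr ⟨hz, by simpa using hzx⟩)
        simp [Function.update, hzx, this]
  | ex x A ih =>
      intro v w h
      simp only [Fm.holds, Fm.freeVars] at *
      apply exists_congr
      intro d
      apply ih
      intro z hz
      by_cases hzx : z = x
      · subst hzx; simp [Function.update]
      · have := h z (List.mem_filter.mpr ⟨hz, by simpa using hzx⟩)
        simp [Function.update, hzx, this]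

theorem Fm.holds_subst {D : Type} (I : Interp D) (x : ℕ) (u : Tm) :
    ∀ (A : Fm) (v : ℕ → D), (∀ z ∈ u.varsT, z ∉ A.boundVars) →
      (Fm.holds I v (A.subst x u) ↔ Fm.holds I (Function.update v x (Tm.eval I v u)) A) := by
  intro A
  induction A with
  | atom p ts =>
      intro v h
      simp only [Fm.subst, Fm.holds, List.map_map]
      have : (ts.map fun t => Tm.eval I v (Tm.substT x u t))
           = ts.map (Tm.eval I (Function.update v x (Tm.eval I v u))) := by
        apply List.map_congr_left
        intro t ht
        exact Tm.eval_substT I x u t v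
      rw [Function.comp_def, this]
  | neg A ih =>
      intro v h
      simp only [Fm.subst, Fm.holds, Fm.boundVars] at *
      rw [ih v h]
  | or A B ihA ihB =>
      intro v h
      simp only [Fm.subst, Fm.holds, Fm.boundVars, List.mem_append] at *
      rw [ihA v (fun z hz hb => h z hz (Or.inl hb)), ihB v (fun z hz hb => h z hz (Or.inr hb))]
  | and A B ihA ihB =>
      intro v h
      simp only [Fm.subst, Fm.holds, Fm.boundVars, List.mem_append] at *
      rw [ihA v (fun z hz hb => h z hz (Or.inl hb)), ihB v (fun z hz hb => h z hz (Or.inr hb))]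
  | all y A ih =>
      intro v h
      by_cases hyx : y = x
      · subst hyx
        simp only [Fm.subst, if_pos rfl, Fm.holds]
        apply forall_congr'
        intro d
        rw [Function.update_idem]
      · simp only [Fm.subst, if_neg hyx, Fm.holds]
        apply forall_congr'
        intro d
        have hy_not : y ∉ u.varsT := by
          intro hy
          exact h y hy (by simp [Fm.boundVars])
        have hA : ∀ z ∈ u.varsT, z ∉ A.boundVars := by
          intro z hz hb
          exact h z hz (by simp [Fm.boundVars, hb])
        rw [ih (Function.update v y d) hA]
        have heval : Tm.eval I (Function.update v y d) u = Tm.eval I v u := by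
          apply Tm.eval_congr
          intro z hz
          have : z ≠ y := fun he => hy_not (he ▸ hz)
          simp [Function.update, this]
        rw [heval, Function.update_comm (fun he => hyx he.symm)]
  | ex y A ih =>
      intro v h
      by_cases hyx : y = x
      · subst hyx
        simp only [Fm.subst, if_pos rfl, Fm.holds]
        apply exists_congr
        intro d
        rw [Function.update_idem]
      · simp only [Fm.subst, if_neg hyx, Fm.holds]
        apply exists_congr
        intro d
        have hy_not : y ∉ u.varsT := by
          intro hy
          exact h y hy (by simp [Fm.boundVars])
        have hA : ∀ z ∈ u.varsT, z ∉ A.boundVars := by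
          intro z hz hb
          exact h z hz (by simp [Fm.boundVars, hb])
        rw [ih (Function.update v y d) hA]
        have heval : Tm.eval I (Function.update v y d) u = Tm.eval I v u := by
          apply Tm.eval_congr
          intro z hz
          have : z ≠ y := fun he => hy_not (he ▸ hz)
          simp [Function.update, this]
        rw [heval, Function.update_comm (fun he => hyx he.symm)]

theorem Alpha.holds_iff {A B : Fm} (h : Alpha A B) :
    ∀ {D : Type} (I : Interp D) (v : ℕ → D), Fm.holds I v A ↔ Fm.holds I v B := by
  induction h with
  | refl A => intro D I v; rfl
  | symm _ ih => intro D I v; exact (ih I v).symm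
  | trans _ _ ih1 ih2 => intro D I v; exact (ih1 I v).trans (ih2 I v)
  | negc _ ih => intro D I v; simp only [Fm.holds]; rw [ih I v]
  | orc _ _ ih1 ih2 => intro D I v; simp only [Fm.holds]; rw [ih1 I v, ih2 I v]
  | andc _ _ ih1 ih2 => intro D I v; simp only [Fm.holds]; rw [ih1 I v, ih2 I v]
  | allc x _ ih =>
      intro D I v; simp only [Fm.holds]
      exact forall_congr' fun d => ih I _
  | exc x _ ih =>
      intro D I v; simp only [Fm.holds]
      exact exists_congr fun d => ih I _
  | allRename x y A hfv hbv =>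
      intro D I v
      simp only [Fm.holds]
      apply forall_congr'
      intro d
      rw [Fm.holds_subst I x (.var y) A (Function.update v y d)
        (by intro z hz; simp only [Tm.varsT, List.mem_singleton] at hz; subst hz; exact hbv)]
      have : Tm.eval I (Function.update v y d) (.var y) = d := by simp [Tm.eval]
      rw [this]
      apply Fm.holds_congr
      intro z hz
      by_cases hzx : z = x
      · subst hzx; simp [Function.update]
      · have hzy : z ≠ y := fun he => hfv (he ▸ hz)
        simp [Function.update, hzx, hzy]
  | exRename x y A hfv hbv =>
      intro D I v
      simp only [Fm.holds]
      apply exists_congr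
      intro d
      rw [Fm.holds_subst I x (.var y) A (Function.update v y d)
        (by intro z hz; simp only [Tm.varsT, List.mem_singleton] at hz; subst hz; exact hbv)]
      have : Tm.eval I (Function.update v y d) (.var y) = d := by simp [Tm.eval]
      rw [this]
      apply Fm.holds_congr
      intro z hz
      by_cases hzx : z = x
      · subst hzx; simp [Function.update]
      · have hzy : z ≠ y := fun he => hfv (he ▸ hz)
        simp [Function.update, hzx, hzy]


theorem Ctx.fill_mono {D : Type} (I : Interp D) :
    ∀ (c : Ctx), c.accessible → ∀ (X Y : Fm) (v : ℕ → D),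
      (c.pol = true → (Fm.holds I v X → Fm.holds I v Y)) →
      (c.pol = false → (Fm.holds I v Y → Fm.holds I v X)) →
      Fm.holds I v (c.fill X) → Fm.holds I v (c.fill Y) := by
  intro c
  induction c with
  | hole =>
      intro _ X Y v hpos hneg h
      exact hpos rfl h
  | negC c ih =>
      intro hacc X Y v hpos hneg h
      simp only [Ctx.fill, Fm.holds] at h ⊢
      simp only [Ctx.pol, Bool.not_eq_true', Bool.not_eq_false'] at hpos hneg
      intro hY
      exact h (ih hacc Y X v hneg hpos hY)
  | orL c B ih =>
      intro hacc X Y v hpos hneg h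
      simp only [Ctx.fill, Fm.holds, Ctx.pol, Ctx.accessible] at *
      rcases h with h | h
      · exact Or.inl (ih hacc X Y v hpos hneg h)
      · exact Or.inr h
  | orR B c ih =>
      intro hacc X Y v hpos hneg h
      simp only [Ctx.fill, Fm.holds, Ctx.pol, Ctx.accessible] at *
      rcases h with h | h
      · exact Or.inl h
      · exact Or.inr (ih hacc X Y v hpos hneg h)
  | andL c B ih =>
      intro hacc X Y v hpos hneg h
      simp only [Ctx.fill, Fm.holds, Ctx.pol, Ctx.accessible] at *
      exact ⟨ih hacc X Y v hpos hneg h.1, h.2⟩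
  | andR B c ih =>
      intro hacc X Y v hpos hneg h
      simp only [Ctx.fill, Fm.holds, Ctx.pol, Ctx.accessible] at *
      exact ⟨h.1, ih hacc X Y v hpos hneg h.2⟩
  | allC x c ih => intro hacc; exact absurd hacc (by simp [Ctx.accessible])
  | exC x c ih => intro hacc; exact absurd hacc (by simp [Ctx.accessible])

theorem Ctx.fill_mono_deep {D : Type} (I : Interp D) :
    ∀ (c : Ctx) (X Y : Fm),
      (∀ w : ℕ → D, c.pol = true → (Fm.holds I w X → Fm.holds I w Y)) →
      (∀ w : ℕ → D, c.pol = false → (Fm.holds I w Y → Fm.holds I w X)) →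
      ∀ v : ℕ → D, Fm.holds I v (c.fill X) → Fm.holds I v (c.fill Y) := by
  intro c
  induction c with
  | hole =>
      intro X Y hpos hneg v h
      exact hpos v rfl h
  | negC c ih =>
      intro X Y hpos hneg v h
      simp only [Ctx.fill, Fm.holds] at h ⊢
      simp only [Ctx.pol, Bool.not_eq_true', Bool.not_eq_false'] at hpos hneg
      intro hY
      exact h (ih Y X hneg hpos v hY)
  | orL c B ih =>
      intro X Y hpos hneg v h
      simp only [Ctx.fill, Fm.holds, Ctx.pol] at *
      rcases h with h | h
      · exact Or.inl (ih X Y hpos hneg v h)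
      · exact Or.inr h
  | orR B c ih =>
      intro X Y hpos hneg v h
      simp only [Ctx.fill, Fm.holds, Ctx.pol] at *
      rcases h with h | h
      · exact Or.inl h
      · exact Or.inr (ih X Y hpos hneg v h)
  | andL c B ih =>
      intro X Y hpos hneg v h
      simp only [Ctx.fill, Fm.holds, Ctx.pol] at *
      exact ⟨ih X Y hpos hneg v h.1, h.2⟩
  | andR B c ih =>
      intro X Y hpos hneg v h
      simp only [Ctx.fill, Fm.holds, Ctx.pol] at *
      exact ⟨h.1, ih X Y hpos hneg v h.2⟩
  | allC x c ih =>
      intro X Y hpos hneg v h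
      simp only [Ctx.fill, Fm.holds, Ctx.pol] at *
      intro d
      exact ih X Y hpos hneg _ (h d)
  | exC x c ih =>
      intro X Y hpos hneg v h
      simp only [Ctx.fill, Fm.holds, Ctx.pol] at *
      obtain ⟨d, hd⟩ := h
      exact ⟨d, ih X Y hpos hneg _ hd⟩

theorem Ctx.fill_agree {D : Type} (I : Interp D) :
    ∀ (c : Ctx), c.accessible → ∀ (X : Fm) (v w : ℕ → D),
      (∀ z ∈ c.freeVarsC, v z = w z) → (∀ z ∈ X.freeVars, v z = w z) →
      (Fm.holds I v (c.fill X) ↔ Fm.holds I w (c.fill X)) := by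
  intro c
  induction c with
  | hole =>
      intro _ X v w _ hX
      exact Fm.holds_congr I X v w hX
  | negC c ih =>
      intro hacc X v w hc hX
      simp only [Ctx.fill, Fm.holds, Ctx.freeVarsC, Ctx.accessible] at *
      rw [ih hacc X v w hc hX]
  | orL c B ih =>
      intro hacc X v w hc hX
      simp only [Ctx.fill, Fm.holds, Ctx.freeVarsC, Ctx.accessible, List.mem_append] at *
      rw [ih hacc X v w (fun z hz => hc z (Or.inl hz)) hX,
        Fm.holds_congr I B v w (fun z hz => hc z (Or.inr hz))]
  | orR B c ih =>
      intro hacc X v w hc hX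
      simp only [Ctx.fill, Fm.holds, Ctx.freeVarsC, Ctx.accessible, List.mem_append] at *
      rw [ih hacc X v w (fun z hz => hc z (Or.inr hz)) hX,
        Fm.holds_congr I B v w (fun z hz => hc z (Or.inl hz))]
  | andL c B ih =>
      intro hacc X v w hc hX
      simp only [Ctx.fill, Fm.holds, Ctx.freeVarsC, Ctx.accessible, List.mem_append] at *
      rw [ih hacc X v w (fun z hz => hc z (Or.inl hz)) hX,
        Fm.holds_congr I B v w (fun z hz => hc z (Or.inr hz))]
  | andR B c ih =>
      intro hacc X v w hc hX
      simp only [Ctx.fill, Fm.holds, Ctx.freeVarsC, Ctx.accessible, List.mem_append] at *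
      rw [ih hacc X v w (fun z hz => hc z (Or.inr hz)) hX,
        Fm.holds_congr I B v w (fun z hz => hc z (Or.inl hz))]
  | allC x c ih => intro hacc; exact absurd hacc (by simp [Ctx.accessible])
  | exC x c ih => intro hacc; exact absurd hacc (by simp [Ctx.accessible])

open Classical in
theorem Fm.sentEval_holds {D : Type} (I : Interp D) (v : ℕ → D) :
    ∀ A : Fm, A.qf →
      (A.sentEval (fun p ts => decide (I.prd p (ts.map (Tm.eval I v)))) = true ↔
        Fm.holds I v A) := by
  intro A
  induction A with
  | atom p ts => intro _; simp [Fm.sentEval, Fm.holds]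
  | neg A ih =>
      intro hqf
      simp only [Fm.sentEval, Fm.holds, Bool.not_eq_true', ← Bool.not_eq_true]
      rw [ih hqf]
  | or A B ihA ihB =>
      intro hqf
      simp only [Fm.sentEval, Fm.holds, Bool.or_eq_true]
      rw [ihA hqf.1, ihB hqf.2]
  | and A B ihA ihB =>
      intro hqf
      simp only [Fm.sentEval, Fm.holds, Bool.and_eq_true]
      rw [ihA hqf.1, ihB hqf.2]
  | all x A ih => intro hqf; exact absurd hqf (by simp [Fm.qf])
  | ex x A ih => intro hqf; exact absurd hqf (by simp [Fm.qf])

theorem Fm.taut_valid {A : Fm} (h : A.taut) : A.valid := by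
  intro D _ I v
  classical
  exact (Fm.sentEval_holds I v A h.1).mp (h.2 _)

theorem mkQ_true (x : ℕ) (H : Fm) : mkQ true x H = .ex x H := rfl
theorem mkQ_false (x : ℕ) (H : Fm) : mkQ false x H = .all x H := rfl

theorem Deriv.valid_of {B A : Fm} {ts : List Tm} (h : Deriv B A ts) (hB : B.valid) :
    A.valid := by
  induction h with
  | refl => exact hB
  | gamma c q x t H hder hacc hq hvars ih =>
      intro D hD I v
      apply Ctx.fill_mono I c hacc (Fm.subst x t H) (mkQ q x H) v ?_ ?_ (ih D hD I v)
      · intro hpol hsub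
        have hq' : q = true := hq.trans hpol
        subst hq'
        rw [mkQ_true]; simp only [Fm.holds]
        exact ⟨Tm.eval I v t, (Fm.holds_subst I x t H v hvars).mp hsub⟩
      · intro hpol hall
        have hq' : q = false := hq.trans hpol
        subst hq'
        rw [mkQ_false] at hall; simp only [Fm.holds] at hall
        exact (Fm.holds_subst I x t H v hvars).mpr (hall (Tm.eval I v t))
  | delta c q y H hder hacc hq hy ih =>
      intro D hD I v
      cases hpol : c.pol with
      | true =>
          have hq' : q = false := by rw [hq, hpol]; rfl
          subst hq'
          by_cases hall : ∀ d : D, Fm.holds I (Function.update v y d) H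
          · apply Ctx.fill_mono I c hacc H (mkQ false y H) v ?_ ?_ (ih D hD I v)
            · intro _ _
              rw [mkQ_false]; simpa only [Fm.holds] using hall
            · intro hpol'; rw [hpol] at hpol'; cases hpol'
          · push_neg at hall
            obtain ⟨d, hd⟩ := hall
            have hw : Fm.holds I (Function.update v y d) (c.fill (mkQ false y H)) := by
              apply Ctx.fill_mono I c hacc H (mkQ false y H) _ ?_ ?_ (ih D hD I _)
              · intro _ hH; exact absurd hH hd
              · intro hpol'; rw [hpol] at hpol'; cases hpol'
            refine (Ctx.fill_agree I c hacc (mkQ false y H) v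
              (Function.update v y d) ?_ ?_).mpr hw
            · intro z hz
              have : z ≠ y := fun he => hy (he ▸ hz)
              simp [Function.update, this]
            · intro z hz
              rw [mkQ_false] at hz
              simp only [Fm.freeVars, List.mem_filter, decide_eq_true_eq] at hz
              simp [Function.update, hz.2]
      | false =>
          have hq' : q = true := by rw [hq, hpol]; rfl
          subst hq'
          by_cases hex : ∃ d : D, Fm.holds I (Function.update v y d) H
          · obtain ⟨d, hd⟩ := hex
            have hw : Fm.holds I (Function.update v y d) (c.fill (mkQ true y H)) := by
              apply Ctx.fill_mono I c hacc H (mkQ true y H) _ ?_ ?_ (ih D hD I _)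
              · intro hpol'; rw [hpol] at hpol'; cases hpol'
              · intro _ _; exact hd
            refine (Ctx.fill_agree I c hacc (mkQ true y H) v
              (Function.update v y d) ?_ ?_).mpr hw
            · intro z hz
              have : z ≠ y := fun he => hy (he ▸ hz)
              simp [Function.update, this]
            · intro z hz
              rw [mkQ_true] at hz
              simp only [Fm.freeVars, List.mem_filter, decide_eq_true_eq] at hz
              simp [Function.update, hz.2]
          · apply Ctx.fill_mono I c hacc H (mkQ true y H) v ?_ ?_ (ih D hD I v)
            · intro hpol'; rw [hpol] at hpol'; cases hpol'
            · intro _ hexv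
              rw [mkQ_true] at hexv; simp only [Fm.holds] at hexv
              exact absurd hexv hex
  | simp c H H' hder hAl ih =>
      intro D hD I v
      apply Ctx.fill_mono_deep I c (if c.pol then Fm.or H H' else Fm.and H H') H ?_ ?_ v
        (ih D hD I v)
      · intro w hpol h
        rw [if_pos hpol] at h
        rcases h with h | h
        · exact h
        · exact (hAl.holds_iff I w).mpr h
      · intro w hpol h
        rw [if_neg (by simp [hpol])]
        exact ⟨h, (hAl.holds_iff I w).mp h⟩
  | alpha hder hAl ih =>
      intro D hD I v
      exact (hAl.holds_iff I v).mp (ih D hD I v)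

/-- **Soundness of Herbrand's modus-ponens-free calculus.** If `A` is derivable
from a sentential tautology by applications of the generalized rules of
simplification, γ-quantification and δ-quantification (and renamings of bound
variables), then `A` is valid. -/
theorem soundness_of_herbrand_calculus (A : Fm) :
    (∃ (B : Fm) (ts : List Tm), B.taut ∧ Deriv B A ts) → A.valid := by
  rintro ⟨B, ts, hT, hderiv⟩
  exact hderiv.valid_of (Fm.taut_valid hT)

end Herbrand
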